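/- Let c₀,...,cₙ be complex numbers with σ = c₀+⋯+cₙ ≠ 0 and all cᵢ ≠ 0, and consider the covectors α_{ij} = √(cᵢcⱼ)(eᵢ−eⱼ) for 0 ≤ i < j ≤ n in the hyperplane {Σxᵢ = 0} ⊂ ℂ^{n+1}. Then the canonical form G(x,y) = Σ_{i<j} cᵢcⱼ(xᵢ−xⱼ)(yᵢ−yⱼ) is nondegenerate on this hyperplane, and the vector α_{ij}^∨ = σ^{−1}√(cᵢcⱼ)(cᵢ^{−1}eᵢ − cⱼ^{−1}eⱼ) satisfies G(α_{ij}^∨, y) = α_{ij}(y) for all y in the hyperplane. -/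

import Mathlib

open Finset in
private lemma key_form (n : ℕ) (c : Fin (n + 1) → ℂ) (x y : Fin (n + 1) → ℂ) :
    (∑ i, ∑ j ∈ Ioi i, c i * c j * (x i - x j) * (y i - y j))
      = (∑ k, c k) * (∑ k, c k * x k * y k)
        - (∑ k, c k * x k) * (∑ k, c k * y k) := by
  have hsym := Finset.sum_sum_Ioi_add_eq_sum_sum_off_diag
    (fun i j => c i * c j * (x i - x j) * (y i - y j))
  have h2 : 2 * (∑ i, ∑ j ∈ Ioi i, c i * c j * (x i - x j) * (y i - y j))
      = ∑ i, ∑ j ∈ Ioi i,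
          (c j * c i * (x j - x i) * (y j - y i) + c i * c j * (x i - x j) * (y i - y j)) := by
    rw [Finset.mul_sum]
    refine Finset.sum_congr rfl fun i _ => ?_
    rw [Finset.mul_sum]
    exact Finset.sum_congr rfl fun j _ => by ring
  have hdiag : (∑ i, ∑ j ∈ ({i}ᶜ : Finset (Fin (n+1))),
      c j * c i * (x j - x i) * (y j - y i))
      = ∑ i, ∑ j, c j * c i * (x j - x i) * (y j - y i) := by
    refine Finset.sum_congr rfl fun i _ => ?_
    rw [← Finset.sum_compl_add_sum {i}]
    simp
  have hfull : (∑ i : Fin (n+1), ∑ j, c j * c i * (x j - x i) * (y j - y i))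
      = 2 * ((∑ k, c k) * (∑ k, c k * x k * y k)
        - (∑ k, c k * x k) * (∑ k, c k * y k)) := by
    have inner : ∀ i, (∑ j, c j * c i * (x j - x i) * (y j - y i))
        = (∑ k, c k * x k * y k) * c i + (∑ k, c k) * (c i * x i * y i)
          - (∑ k, c k * x k) * (c i * y i) - (∑ k, c k * y k) * (c i * x i) := by
      intro i
      rw [Finset.sum_mul, Finset.sum_mul, Finset.sum_mul, Finset.sum_mul,
        ← Finset.sum_add_distrib, ← Finset.sum_sub_distrib, ← Finset.sum_sub_distrib]
      exact Finset.sum_congr rfl fun j _ => by ring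
    rw [Finset.sum_congr rfl fun i _ => inner i]
    rw [Finset.sum_sub_distrib, Finset.sum_sub_distrib, Finset.sum_add_distrib,
      ← Finset.mul_sum, ← Finset.mul_sum, ← Finset.mul_sum, ← Finset.mul_sum]
    ring
  refine mul_left_cancel₀ (two_ne_zero) ?_
  rw [h2, hsym, ← hfull]
  refine Finset.sum_congr rfl fun i _ => ?_
  rw [← Finset.sum_compl_add_sum {i} (fun j => c j * c i * (x j - x i) * (y j - y i))]
  simp only [Finset.sum_singleton, sub_self, mul_zero, zero_mul, add_zero]

open Finset in
/-- For the `Aₙ(c)` system: the canonical form `G(x,y) = Σ_{i<j} cᵢcⱼ(xᵢ−xⱼ)(yᵢ−yⱼ)` is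
nondegenerate on the hyperplane `Σxᵢ = 0`, and `α^∨ = σ^{−1}√(cᵢcⱼ)(cᵢ^{−1}eᵢ−cⱼ^{−1}eⱼ)`
represents the covector `α = √(cᵢcⱼ)(eᵢ−eⱼ)` with respect to `G`. -/
theorem stmt_11 (n : ℕ) (c : Fin (n + 1) → ℂ) (hc : ∀ i, c i ≠ 0)
    (σ : ℂ) (hσdef : σ = ∑ i, c i) (hσ : σ ≠ 0)
    (G : (Fin (n + 1) → ℂ) → (Fin (n + 1) → ℂ) → ℂ)
    (hG : ∀ x y, G x y = ∑ i, ∑ j ∈ Ioi i, c i * c j * (x i - x j) * (y i - y j)) :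
    (∀ x : Fin (n + 1) → ℂ, (∑ i, x i) = 0 →
      (∀ y : Fin (n + 1) → ℂ, (∑ i, y i) = 0 → G x y = 0) → x = 0) ∧
    (∀ i j : Fin (n + 1), i < j → ∀ s : ℂ, s ^ 2 = c i * c j →
      ∀ y : Fin (n + 1) → ℂ, (∑ k, y k) = 0 →
        G (fun k => σ⁻¹ * s * ((c i)⁻¹ * (if k = i then 1 else 0)
              - (c j)⁻¹ * (if k = j then 1 else 0))) y
          = s * (y i - y j)) := by
  have hn1 : ((n : ℂ) + 1) ≠ 0 := by
    have := (Nat.cast_ne_zero (R := ℂ)).mpr (Nat.succ_ne_zero n)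
    push_cast at this
    exact this
  have hGform : ∀ x y, G x y = σ * (∑ k, c k * x k * y k)
      - (∑ k, c k * x k) * (∑ k, c k * y k) := by
    intro x y
    rw [hG, key_form, hσdef]
  constructor
  · intro x hx hxy
    have hpair : ∀ i j : Fin (n + 1),
        σ * (c i * x i - c j * x j) = (∑ k, c k * x k) * (c i - c j) := by
      intro i j
      by_cases hij : i = j
      · subst hij; ring
      · have hy : (∑ k, ((if k = i then (1:ℂ) else 0) - (if k = j then 1 else 0))) = 0 := by
          rw [Finset.sum_sub_distrib]
          simp [Finset.sum_ite_eq']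
        have := hxy (fun k => (if k = i then (1:ℂ) else 0) - (if k = j then 1 else 0)) hy
        rw [hGform] at this
        have e1 : (∑ k, c k * x k * ((if k = i then (1:ℂ) else 0) - (if k = j then 1 else 0)))
            = c i * x i - c j * x j := by
          simp only [mul_sub]
          rw [Finset.sum_sub_distrib]
          simp [Finset.sum_ite_eq', mul_ite]
        have e2 : (∑ k, c k * ((if k = i then (1:ℂ) else 0) - (if k = j then 1 else 0)))
            = c i - c j := by
          simp only [mul_sub]
          rw [Finset.sum_sub_distrib]
          simp [Finset.sum_ite_eq', mul_ite]
        rw [e1, e2] at this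
        linear_combination this
    set S := ∑ k, c k * x k with hS
    have hconst : ∀ i, σ * (c i * x i) = S * c i := by
      intro i
      have hs : ∀ j, σ * (c i * x i) - σ * (c j * x j) = S * c i - S * c j := by
        intro j
        linear_combination hpair i j
      have hsum : (∑ j, (σ * (c i * x i) - σ * (c j * x j)))
          = ∑ j, (S * c i - S * c j) := Finset.sum_congr rfl fun j _ => hs j
      rw [Finset.sum_sub_distrib, Finset.sum_sub_distrib, Finset.sum_const,
        Finset.sum_const, ← Finset.mul_sum, ← Finset.mul_sum, ← hS, ← hσdef] at hsum
      simp only [Finset.card_univ, Fintype.card_fin, nsmul_eq_mul] at hsum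
      push_cast at hsum
      have h' : ((n:ℂ)+1) * (σ * (c i * x i)) = ((n:ℂ)+1) * (S * c i) := by
        linear_combination hsum
      exact mul_left_cancel₀ hn1 h'
    have hx' : ∀ i, x i = S / σ := by
      intro i
      have h'' : c i * x i = c i * (S / σ) := by
        rw [mul_div_assoc'] at *
        rw [eq_div_iff hσ]
        linear_combination hconst i
      exact mul_left_cancel₀ (hc i) h''
    have hSz : S = 0 := by
      have hsum2 : (0:ℂ) = ((n:ℂ)+1) * (S / σ) := by
        calc (0:ℂ) = ∑ i, x i := hx.symm
        _ = ∑ _i : Fin (n+1), S / σ := Finset.sum_congr rfl fun i _ => hx' i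
        _ = ((n:ℂ)+1) * (S/σ) := by
            rw [Finset.sum_const, Finset.card_univ, Fintype.card_fin, nsmul_eq_mul]
            push_cast; ring
      rcases mul_eq_zero.mp hsum2.symm with h | h
      · exact absurd h hn1
      · rcases div_eq_zero_iff.mp h with h' | h'
        · exact h'
        · exact absurd h' hσ
    funext i
    simp [hx' i, hSz]
  · intro i j hij s hs y hy
    have hne : i ≠ j := ne_of_lt hij
    rw [hGform]
    have e1 : (∑ k, c k * (σ⁻¹ * s * ((c i)⁻¹ * (if k = i then (1:ℂ) else 0)
          - (c j)⁻¹ * (if k = j then 1 else 0))) * y k)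
        = σ⁻¹ * s * (y i - y j) := by
      have h : ∀ k, c k * (σ⁻¹ * s * ((c i)⁻¹ * (if k = i then (1:ℂ) else 0)
          - (c j)⁻¹ * (if k = j then 1 else 0))) * y k
          = σ⁻¹ * s * (c k * (c i)⁻¹ * (if k = i then (1:ℂ) else 0) * y k)
            - σ⁻¹ * s * (c k * (c j)⁻¹ * (if k = j then 1 else 0) * y k) := by
        intro k; ring
      rw [Finset.sum_congr rfl fun k _ => h k, Finset.sum_sub_distrib,
        ← Finset.mul_sum, ← Finset.mul_sum]
      have si : (∑ k, c k * (c i)⁻¹ * (if k = i then (1:ℂ) else 0) * y k) = y i := by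
        rw [Finset.sum_eq_single i]
        · field_simp
          rw [if_pos trivial, mul_one]
          exact mul_div_cancel_left₀ _ (hc i)
        · intro b _ hb; simp [hb]
        · simp
      have sj : (∑ k, c k * (c j)⁻¹ * (if k = j then (1:ℂ) else 0) * y k) = y j := by
        rw [Finset.sum_eq_single j]
        · field_simp
          rw [if_pos trivial, mul_one]
          exact mul_div_cancel_left₀ _ (hc j)
        · intro b _ hb; simp [hb]
        · simp
      rw [si, sj]; ring
    have e2 : (∑ k, c k * (σ⁻¹ * s * ((c i)⁻¹ * (if k = i then (1:ℂ) else 0)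
          - (c j)⁻¹ * (if k = j then 1 else 0)))) = 0 := by
      have h : ∀ k, c k * (σ⁻¹ * s * ((c i)⁻¹ * (if k = i then (1:ℂ) else 0)
          - (c j)⁻¹ * (if k = j then 1 else 0)))
          = σ⁻¹ * s * (c k * (c i)⁻¹ * (if k = i then (1:ℂ) else 0))
            - σ⁻¹ * s * (c k * (c j)⁻¹ * (if k = j then 1 else 0)) := by
        intro k; ring
      rw [Finset.sum_congr rfl fun k _ => h k, Finset.sum_sub_distrib,
        ← Finset.mul_sum, ← Finset.mul_sum]
      have si : (∑ k, c k * (c i)⁻¹ * (if k = i then (1:ℂ) else 0)) = 1 := by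
        rw [Finset.sum_eq_single i]
        · field_simp
          rw [if_pos trivial, mul_one]
          exact div_self (hc i)
        · intro b _ hb; simp [hb]
        · simp
      have sj : (∑ k, c k * (c j)⁻¹ * (if k = j then (1:ℂ) else 0)) = 1 := by
        rw [Finset.sum_eq_single j]
        · field_simp
          rw [if_pos trivial, mul_one]
          exact div_self (hc j)
        · intro b _ hb; simp [hb]
        · simp
      rw [si, sj]; ring
    rw [e1, e2]
    field_simp
    ring
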